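/- Let A = (a_{ij}) be a 2N×2N skew-symmetric matrix over a field and y ∈ ℂ^{2N}. Then det(a_{ij} − y_i y_j) = det(a_{ij}). -/

import Mathlib

open Matrix Polynomial

/-- quadratic form of a skew matrix vanishes -/
lemma quad_skew_zero {n : Type*} [Fintype n] (B : Matrix n n ℂ) (h : Bᵀ = -B)
    (y : n → ℂ) : y ⬝ᵥ B *ᵥ y = 0 := by
  have h1 : y ⬝ᵥ B *ᵥ y = (y ᵥ* B) ⬝ᵥ y := Matrix.dotProduct_mulVec y B y
  have h2 : y ᵥ* B = -(B *ᵥ y) := by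
    rw [← Matrix.mulVec_transpose, h, Matrix.neg_mulVec]
  have h3 : y ⬝ᵥ B *ᵥ y = -(y ⬝ᵥ B *ᵥ y) := by
    conv_lhs => rw [h1, h2]
    rw [neg_dotProduct, dotProduct_comm (B *ᵥ y) y]
  linear_combination h3 / 2

/-- invertible skew case -/
lemma det_skew_sub_rank_one {n : Type*} [Fintype n] [DecidableEq n]
    (A : Matrix n n ℂ) (h : Aᵀ = -A) (hA : IsUnit A.det) (y : n → ℂ) :
    (A - Matrix.replicateCol Unit y * Matrix.replicateRow Unit y).det = A.det := by
  have hinv : A⁻¹ᵀ = -A⁻¹ := by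
    rw [Matrix.transpose_nonsing_inv, h]
    apply Matrix.inv_eq_right_inv
    rw [Matrix.neg_mul, Matrix.mul_neg, neg_neg, Matrix.mul_nonsing_inv _ hA]
  have key : A - Matrix.replicateCol Unit y * Matrix.replicateRow Unit y
      = A + Matrix.replicateCol Unit (-y) * Matrix.replicateRow Unit y := by
    ext i j; simp [Matrix.mul_apply, sub_eq_add_neg]
  rw [key, Matrix.det_add_replicateCol_mul_replicateRow hA]
  have : Matrix.replicateRow Unit y * A⁻¹ * Matrix.replicateCol Unit (-y)
      = Matrix.of (fun _ _ : Unit => y ⬝ᵥ A⁻¹ *ᵥ (-y)) := by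
    rw [Matrix.mul_assoc, ← Matrix.replicateCol_mulVec, Matrix.replicateRow_mul_replicateCol]
  rw [this]
  have hq : y ⬝ᵥ A⁻¹ *ᵥ (-y) = 0 := by
    rw [Matrix.mulVec_neg, dotProduct_neg, quad_skew_zero A⁻¹ hinv y, neg_zero]
  have h1 : (1 + Matrix.of (fun _ _ : Unit => y ⬝ᵥ A⁻¹ *ᵥ (-y))).det = 1 := by
    rw [Matrix.det_unique]
    simp [hq]
  rw [h1, mul_one]

/-- evaluation of a matrix polynomial determinant -/
lemma eval_det_aux {n : Type*} [Fintype n] [DecidableEq n] (M J : Matrix n n ℂ) (ε : ℂ) :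
    ((M.map Polynomial.C + (X : ℂ[X]) • J.map Polynomial.C).det).eval ε
      = (M + ε • J).det := by
  have := RingHom.map_det (Polynomial.evalRingHom ε)
      (M.map Polynomial.C + (X : ℂ[X]) • J.map Polynomial.C)
  rw [show (Polynomial.evalRingHom ε : ℂ[X] → ℂ) = Polynomial.eval ε from rfl] at this
  rw [this]
  congr 1
  ext i j
  simp [Matrix.map_apply]
  ring_nf

lemma K_transpose (N : ℕ) :
    (Matrix.fromBlocks 0 1 (-1) 0 : Matrix (Fin N ⊕ Fin N) (Fin N ⊕ Fin N) ℂ)ᵀ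
      = -(Matrix.fromBlocks 0 1 (-1) 0) := by
  ext i j
  cases i <;> cases j <;> simp [Matrix.fromBlocks, Matrix.one_apply, eq_comm]

lemma K_sq (N : ℕ) :
    (Matrix.fromBlocks 0 1 (-1) 0 : Matrix (Fin N ⊕ Fin N) (Fin N ⊕ Fin N) ℂ)
      * Matrix.fromBlocks 0 1 (-1) 0 = -1 := by
  rw [Matrix.fromBlocks_multiply]
  rw [← Matrix.fromBlocks_one]
  ext i j
  cases i <;> cases j <;> simp [Matrix.fromBlocks, Matrix.one_apply]

/-- the standard symplectic matrix -/
noncomputable def Jmat (N : ℕ) : Matrix (Fin (2 * N)) (Fin (2 * N)) ℂ :=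
  Matrix.reindex (finSumFinEquiv.trans (finCongr (two_mul N).symm))
    (finSumFinEquiv.trans (finCongr (two_mul N).symm))
    (Matrix.fromBlocks 0 1 (-1) 0)

lemma Jmat_transpose (N : ℕ) : (Jmat N)ᵀ = -(Jmat N) := by
  unfold Jmat
  rw [Matrix.transpose_reindex, K_transpose]
  ext i j
  simp [Matrix.submatrix_apply]

lemma Jmat_mul_self (N : ℕ) : Jmat N * Jmat N = -1 := by
  unfold Jmat
  rw [Matrix.reindex_apply, Matrix.submatrix_mul_equiv, K_sq]
  ext i j
  simp [Matrix.submatrix_apply, Matrix.one_apply, Fin.ext_iff]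

lemma Jmat_det_unit (N : ℕ) : IsUnit (Jmat N).det := by
  apply IsUnit.of_mul_eq_one (Jmat N).det
  rw [← Matrix.det_mul, Jmat_mul_self, Matrix.det_neg, Matrix.det_one]
  simp [pow_mul]

lemma Q_ne_zero {n : Type*} [Fintype n] [DecidableEq n]
    (A J : Matrix n n ℂ) (hJu : IsUnit J.det) :
    (A.map Polynomial.C + (X : ℂ[X]) • J.map Polynomial.C).det ≠ 0 := by
  have h2 : J.map Polynomial.C * Matrix.scalar n (X : ℂ[X])
      = (X : ℂ[X]) • J.map Polynomial.C := by
    ext i j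
    rw [Matrix.scalar_apply, Matrix.mul_diagonal]
    simp only [Matrix.smul_apply, Matrix.map_apply, smul_eq_mul]
    ring
  have hfact : A.map Polynomial.C + (X : ℂ[X]) • J.map Polynomial.C
      = J.map Polynomial.C * Matrix.charmatrix (-(J⁻¹ * A)) := by
    unfold Matrix.charmatrix
    have h1 : ((Polynomial.C : ℂ →+* ℂ[X]).mapMatrix (-(J⁻¹ * A)) : Matrix n n ℂ[X])
        = -((J⁻¹ * A).map Polynomial.C) := by
      ext i j
      simp only [RingHom.mapMatrix_apply, Matrix.map_apply, Matrix.neg_apply, map_neg]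
    rw [h1, sub_neg_eq_add, Matrix.mul_add, h2, ← Matrix.map_mul,
      Matrix.mul_nonsing_inv_cancel_left _ _ hJu, add_comm]
  rw [hfact, Matrix.det_mul]
  apply mul_ne_zero
  · have : (J.map Polynomial.C).det = Polynomial.C J.det := by
      rw [(Polynomial.C : ℂ →+* ℂ[X]).map_det J]
      rfl
    rw [this]
    simpa using hJu.ne_zero
  · exact ((-(J⁻¹ * A)).charpoly_monic).ne_zero

theorem stmt_6 (N : ℕ) (A : Matrix (Fin (2 * N)) (Fin (2 * N)) ℂ)
    (hskew : ∀ i j, A j i = -A i j) (hdiag : ∀ i, A i i = 0)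
    (y : Fin (2 * N) → ℂ) :
    (Matrix.of fun i j => A i j - y i * y j).det = A.det := by
  have hAt : Aᵀ = -A := by
    ext i j
    rw [Matrix.transpose_apply, Matrix.neg_apply]
    exact hskew i j
  have hof : (Matrix.of fun i j => A i j - y i * y j)
      = A - Matrix.replicateCol Unit y * Matrix.replicateRow Unit y := by
    ext i j; simp [Matrix.mul_apply]
  rw [hof]
  set J := Jmat N with hJdef
  set B := A - Matrix.replicateCol Unit y * Matrix.replicateRow Unit y with hB
  set P : ℂ[X] := (B.map Polynomial.C + (X : ℂ[X]) • J.map Polynomial.C).det with hP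
  set Q : ℂ[X] := (A.map Polynomial.C + (X : ℂ[X]) • J.map Polynomial.C).det with hQ
  have hPQ : P = Q := by
    apply Polynomial.eq_of_infinite_eval_eq
    have hfin := Polynomial.finite_setOf_isRoot (Q_ne_zero A J (Jmat_det_unit N))
    refine hfin.infinite_compl.mono ?_
    intro ε hε
    have hQe : Q.eval ε = (A + ε • J).det := eval_det_aux A J ε
    have hd : (A + ε • J).det ≠ 0 := by
      rw [← hQe]; exact hε
    have hskew' : (A + ε • J)ᵀ = -(A + ε • J) := by
      rw [Matrix.transpose_add, hAt, Matrix.transpose_smul, Jmat_transpose, smul_neg, neg_add]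
    have hkey := det_skew_sub_rank_one (A + ε • J) hskew' hd.isUnit y
    show P.eval ε = Q.eval ε
    rw [hQe, eval_det_aux B J ε, hB, sub_add_eq_add_sub, hkey]
  have h0P : P.eval 0 = B.det := by
    rw [hP, eval_det_aux B J 0]
    simp
  have h0Q : Q.eval 0 = A.det := by
    rw [hQ, eval_det_aux A J 0]
    simp
  rw [← h0P, hPQ, h0Q]
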